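/- Acyclic multiline queues of type X are in bijection with multiline queues of type 1X1. Concretely: appending a column with a top-row vacancy and a bottom-row 1-ball to both the left and right of an acyclic MLQ of type X yields an MLQ of type 1X1, and this map is a bijection onto MLQ(1X1). -/
import Mathlib


/-- Positions are `1, …, n`. A bottom row ball (position of a 0 or 1 of `X`) at position
`p` is occupied (a 0-ball) under the (non-wrapping) ball-drop algorithm iff there is some
`q < p` such that `(q, p]` contains at least as many top row balls (elements of `T`) as
bottom row balls. -/
def occupiedPos (X : ℕ → Fin 3) (T : Finset ℕ) (p : ℕ) : Prop :=
  ∃ q < p, ((Finset.Ioc q p).filter (fun s => X s ≠ 2)).card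
      ≤ (T.filter (fun s => q < s ∧ s ≤ p)).card

/-- `T` is a multiline queue (on a ring) of type `X` on `{1, …, n}`. -/
def MLQtype (n : ℕ) (X : ℕ → Fin 3) (T : Finset ℕ) : Prop :=
  T ⊆ Finset.Icc 1 n ∧
  T.card = ((Finset.Icc 1 n).filter (fun p => X p = 0)).card ∧
  ∀ p ∈ Finset.Icc 1 n, (X p = 0 ↔ (X p ≠ 2 ∧ occupiedPos X T p))

/-- `T` is an acyclic multiline queue of type `X` on `{1, …, n}` (open boundaries):
every top row ball occupies a bottom row ball weakly to its right without wrapping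
(for every threshold `j`, there are at least as many bottom row balls in `[j, n]` as top
row balls there), and the occupied bottom row balls are exactly the 0's of `X`. -/
def AMLQtype (n : ℕ) (X : ℕ → Fin 3) (T : Finset ℕ) : Prop :=
  T ⊆ Finset.Icc 1 n ∧
  T.card = ((Finset.Icc 1 n).filter (fun p => X p = 0)).card ∧
  (∀ j, (T.filter (fun x => j ≤ x)).card
      ≤ ((Finset.Icc j n).filter (fun s => X s ≠ 2)).card) ∧
  ∀ p ∈ Finset.Icc 1 n, (X p = 0 ↔ (X p ≠ 2 ∧ occupiedPos X T p))

namespace AmlqAux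

def X' (n : ℕ) (X : ℕ → Fin 3) : ℕ → Fin 3 :=
  fun j => if j = 1 ∨ j = n + 2 then 1 else X (j - 1)

variable (n : ℕ) (X : ℕ → Fin 3)

lemma X'one : X' n X 1 = 1 := if_pos (Or.inl rfl)
lemma X'top : X' n X (n + 2) = 1 := if_pos (Or.inr rfl)
lemma X'mid (j : ℕ) (h1 : 2 ≤ j) (h2 : j ≤ n + 1) : X' n X j = X (j - 1) :=
  if_neg (by omega)

lemma addInj : Function.Injective (· + 1 : ℕ → ℕ) := fun a b h => by simpa using h

lemma cardShift (p : ℕ → Prop) [DecidablePred p] (s : Finset ℕ) :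
    ((s.image (· + 1)).filter p).card = (s.filter (fun t => p (t + 1))).card := by
  rw [Finset.filter_image]
  exact Finset.card_image_of_injective _ (addInj)

lemma IocShift (p : ℕ → Prop) [DecidablePred p] (a b : ℕ) :
    ((Finset.Ioc (a + 1) (b + 1)).filter p).card
      = ((Finset.Ioc a b).filter (fun t => p (t + 1))).card := by
  rw [← Finset.image_add_right_Ioc]
  exact cardShift p _

/-- bottom-row counts agree under shift, on inner intervals -/
lemma botCount (a b : ℕ) (hb : b ≤ n) :
    ((Finset.Ioc (a + 1) (b + 1)).filter (fun s => X' n X s ≠ 2)).card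
      = ((Finset.Ioc a b).filter (fun s => X s ≠ 2)).card := by
  rw [IocShift]
  congr 1
  apply Finset.filter_congr
  intro t ht
  simp only [Finset.mem_Ioc] at ht
  rw [X'mid n X (t + 1) (by omega) (by omega)]
  simp

/-- top-row counts agree under shift -/
lemma topCount (a b : ℕ) (T : Finset ℕ) :
    ((T.image (· + 1)).filter (fun s => a + 1 < s ∧ s ≤ b + 1)).card
      = (T.filter (fun s => a < s ∧ s ≤ b)).card := by
  rw [cardShift]
  congr 1
  apply Finset.filter_congr
  intro t _
  omega

/-- a witness `q = 0` can be upgraded to a witness `q = 1` -/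
lemma q0 (T' : Finset ℕ) (hT' : ∀ s ∈ T', 2 ≤ s) (p' : ℕ) (hp' : 1 ≤ p')
    (h : ((Finset.Ioc 0 p').filter (fun s => X' n X s ≠ 2)).card
      ≤ (T'.filter (fun s => 0 < s ∧ s ≤ p')).card) :
    ((Finset.Ioc 1 p').filter (fun s => X' n X s ≠ 2)).card
      ≤ (T'.filter (fun s => 1 < s ∧ s ≤ p')).card := by
  have e1 : Finset.Ioc 0 p' = insert 1 (Finset.Ioc 1 p') := by
    ext x; simp only [Finset.mem_Ioc, Finset.mem_insert]; omega
  have e2 : T'.filter (fun s => 0 < s ∧ s ≤ p') = T'.filter (fun s => 1 < s ∧ s ≤ p') := by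
    apply Finset.filter_congr
    intro s hs
    have := hT' s hs
    omega
  rw [e1, Finset.filter_insert, if_pos (by rw [X'one]; decide)] at h
  rw [Finset.card_insert_of_notMem (by simp only [Finset.mem_filter, Finset.mem_Ioc]; omega)] at h
  rw [e2] at h
  omega

lemma memTwo (T : Finset ℕ) (hT : T ⊆ Finset.Icc 1 n) :
    ∀ s ∈ T.image (· + 1), 2 ≤ s := by
  intro s hs
  simp only [Finset.mem_image] at hs
  obtain ⟨t, ht, rfl⟩ := hs
  have := hT ht
  simp only [Finset.mem_Icc] at this
  omega

/-- the main occupiedPos equivalence at inner positions -/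
lemma occShift (T : Finset ℕ) (hT : T ⊆ Finset.Icc 1 n) (p : ℕ) (hp1 : 1 ≤ p) (hpn : p ≤ n) :
    occupiedPos X T p ↔ occupiedPos (X' n X) (T.image (· + 1)) (p + 1) := by
  constructor
  · rintro ⟨q, hq, hle⟩
    exact ⟨q + 1, by omega, by rw [botCount n X q p hpn, topCount]; exact hle⟩
  · rintro ⟨q', hq', hle⟩
    have key : ∀ q'', 1 ≤ q'' → q'' < p + 1 →
        ((Finset.Ioc q'' (p + 1)).filter (fun s => X' n X s ≠ 2)).card
          ≤ ((T.image (· + 1)).filter (fun s => q'' < s ∧ s ≤ p + 1)).card →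
        occupiedPos X T p := by
      intro q'' h1 h2 h3
      obtain ⟨q, rfl⟩ : ∃ q, q'' = q + 1 := ⟨q'' - 1, by omega⟩
      refine ⟨q, by omega, ?_⟩
      rw [botCount n X q p hpn, topCount] at h3
      exact h3
    rcases Nat.eq_zero_or_pos q' with rfl | hq'1
    · exact key 1 le_rfl (by omega) (q0 n X _ (memTwo n T hT) (p + 1) (by omega) hle)
    · exact key q' hq'1 hq' hle

lemma occOne (T' : Finset ℕ) : occupiedPos (X' n X) T' 1 ↔ 1 ∈ T' := by
  have e1 : Finset.Ioc 0 1 = {1} := by ext x; simp only [Finset.mem_Ioc, Finset.mem_singleton]; omega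
  constructor
  · rintro ⟨q, hq, hle⟩
    interval_cases q
    rw [e1, Finset.filter_singleton, if_pos (by rw [X'one]; decide)] at hle
    simp only [Finset.card_singleton] at hle
    have hpos : 0 < (T'.filter (fun s => 0 < s ∧ s ≤ 1)).card := by omega
    obtain ⟨s, hs⟩ := Finset.card_pos.mp hpos
    simp only [Finset.mem_filter] at hs
    obtain ⟨hsT, hs1, hs2⟩ := hs
    have : s = 1 := by omega
    rwa [this] at hsT
  · intro h
    refine ⟨0, one_pos, ?_⟩
    rw [e1, Finset.filter_singleton, if_pos (by rw [X'one]; decide)]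
    simp only [Finset.card_singleton]
    exact Finset.card_pos.mpr ⟨1, Finset.mem_filter.mpr ⟨h, by omega⟩⟩


/-- bottom count on `(q, n+2]` for `1 ≤ q ≤ n+1` -/
lemma botTop (q : ℕ) (hq1 : 1 ≤ q) (hq2 : q ≤ n + 1) :
    ((Finset.Ioc q (n + 2)).filter (fun s => X' n X s ≠ 2)).card
      = ((Finset.Icc q n).filter (fun s => X s ≠ 2)).card + 1 := by
  have e1 : Finset.Ioc q (n + 2) = insert (n + 2) (Finset.Ioc q (n + 1)) := by
    ext x; simp only [Finset.mem_Ioc, Finset.mem_insert]; omega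
  rw [e1, Finset.filter_insert, if_pos (by rw [X'top]; decide),
    Finset.card_insert_of_notMem (by simp only [Finset.mem_filter, Finset.mem_Ioc]; omega)]
  obtain ⟨m, rfl⟩ : ∃ m, q = m + 1 := ⟨q - 1, by omega⟩
  rw [botCount n X m n le_rfl]
  have e2 : Finset.Ioc m n = Finset.Icc (m + 1) n := by
    ext x; simp only [Finset.mem_Ioc, Finset.mem_Icc]; omega
  rw [e2]

/-- top count on `(q, n+2]` -/
lemma topTop (q : ℕ) (T : Finset ℕ) (hT : T ⊆ Finset.Icc 1 n) :
    ((T.image (· + 1)).filter (fun s => q < s ∧ s ≤ n + 2)).card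
      = (T.filter (fun x => q ≤ x)).card := by
  rw [cardShift]
  congr 1
  apply Finset.filter_congr
  intro t ht
  have := hT ht
  simp only [Finset.mem_Icc] at this
  omega

lemma acyc_of_nocc (T : Finset ℕ) (hT : T ⊆ Finset.Icc 1 n)
    (h : ¬ occupiedPos (X' n X) (T.image (· + 1)) (n + 2)) :
    ∀ j, (T.filter (fun x => j ≤ x)).card
      ≤ ((Finset.Icc j n).filter (fun s => X s ≠ 2)).card := by
  have main : ∀ j, 1 ≤ j → j ≤ n + 1 →
      (T.filter (fun x => j ≤ x)).card
        ≤ ((Finset.Icc j n).filter (fun s => X s ≠ 2)).card := by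
    intro j h1 h2
    have hlt : ¬ (((Finset.Ioc j (n + 2)).filter (fun s => X' n X s ≠ 2)).card
        ≤ ((T.image (· + 1)).filter (fun s => j < s ∧ s ≤ n + 2)).card) := by
      intro hc
      exact h ⟨j, by omega, hc⟩
    rw [botTop n X j h1 h2, topTop n j T hT] at hlt
    omega
  intro j
  rcases Nat.eq_zero_or_pos j with rfl | hj1
  · have e2 : T.filter (fun x => 0 ≤ x) = T.filter (fun x => 1 ≤ x) := by
      apply Finset.filter_congr
      intro t ht
      have := hT ht
      simp only [Finset.mem_Icc] at this
      omega
    rw [e2]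
    refine (main 1 le_rfl (by omega)).trans (Finset.card_le_card ?_)
    exact Finset.filter_subset_filter _ (Finset.Icc_subset_Icc_left (by omega))
  rcases le_or_gt j (n + 1) with h2 | h2
  · exact main j hj1 h2
  · have : T.filter (fun x => j ≤ x) = ∅ := by
      rw [Finset.filter_eq_empty_iff]
      intro t ht
      have := hT ht
      simp only [Finset.mem_Icc] at this
      omega
    simp [this]

lemma nocc_of_acyc (T : Finset ℕ) (hT : T ⊆ Finset.Icc 1 n)
    (h : ∀ j, (T.filter (fun x => j ≤ x)).card
      ≤ ((Finset.Icc j n).filter (fun s => X s ≠ 2)).card) :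
    ¬ occupiedPos (X' n X) (T.image (· + 1)) (n + 2) := by
  rintro ⟨q, hq, hle⟩
  have key : ∀ q', 1 ≤ q' → q' ≤ n + 1 →
      ¬ (((Finset.Ioc q' (n + 2)).filter (fun s => X' n X s ≠ 2)).card
        ≤ ((T.image (· + 1)).filter (fun s => q' < s ∧ s ≤ n + 2)).card) := by
    intro q' h1 h2 hc
    rw [botTop n X q' h1 h2, topTop n q' T hT] at hc
    have := h q'
    omega
  rcases Nat.eq_zero_or_pos q with rfl | hq1
  · exact key 1 le_rfl (by omega) (q0 n X _ (memTwo n T hT) (n + 2) (by omega) hle)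
  · exact key q hq1 (by omega) hle

lemma cardZeros : ((Finset.Icc 1 (n + 2)).filter (fun p => X' n X p = 0)).card
    = ((Finset.Icc 1 n).filter (fun p => X p = 0)).card := by
  have e : (Finset.Icc 1 (n + 2)).filter (fun p => X' n X p = 0)
      = ((Finset.Icc 1 n).image (· + 1)).filter (fun p => X' n X p = 0) := by
    rw [Finset.image_add_right_Icc]
    ext x
    simp only [Finset.mem_filter, Finset.mem_Icc]
    constructor
    · rintro ⟨⟨hx1, hx2⟩, h0⟩
      refine ⟨⟨?_, ?_⟩, h0⟩ <;> by_contra hc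
      · have hx : x = 1 := by omega
        rw [hx, X'one] at h0; exact absurd h0 (by decide)
      · have hx : x = n + 2 := by omega
        rw [hx, X'top] at h0; exact absurd h0 (by decide)
    · rintro ⟨⟨hx1, hx2⟩, h0⟩
      exact ⟨⟨by omega, by omega⟩, h0⟩
  rw [e, cardShift]
  congr 1
  apply Finset.filter_congr
  intro t ht
  simp only [Finset.mem_Icc] at ht
  rw [X'mid n X (t + 1) (by omega) (by omega)]
  simp

end AmlqAux

/-- Acyclic multiline queues of type `X` are in bijection with multiline queues of type
`1X1`: appending a column with a top-row vacancy and a bottom-row 1-ball on both sides of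
an acyclic MLQ of type `X` (so all positions shift by one) yields an MLQ of type `1X1`,
and this map is a bijection onto `MLQ(1X1)`. -/
theorem amlq_bij_mlq (n : ℕ) (X : ℕ → Fin 3) :
    Set.BijOn (fun T : Finset ℕ => T.image (· + 1))
      {T | AMLQtype n X T}
      {T' | MLQtype (n + 2)
        (fun j => if j = 1 ∨ j = n + 2 then 1 else X (j - 1)) T'} := by
  have hXeq : (fun j => if j = 1 ∨ j = n + 2 then 1 else X (j - 1)) = AmlqAux.X' n X := rfl
  rw [hXeq]
  refine ⟨?_, ?_, ?_⟩
  · -- MapsTo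
    rintro T ⟨hsub, hcard, hacyc, hpt⟩
    simp only [Set.mem_setOf_eq]
    refine ⟨?_, ?_, ?_⟩
    · intro s hs
      simp only [Finset.mem_image] at hs
      obtain ⟨t, ht, rfl⟩ := hs
      have := hsub ht
      simp only [Finset.mem_Icc] at this ⊢
      omega
    · rw [Finset.card_image_of_injective _ AmlqAux.addInj, hcard, AmlqAux.cardZeros]
    · intro p' hp'
      simp only [Finset.mem_Icc] at hp'
      rcases eq_or_ne p' 1 with rfl | hne1
      · rw [AmlqAux.X'one]
        constructor
        · intro h; exact absurd h (by decide)
        · rintro ⟨-, hocc⟩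
          have h1 := (AmlqAux.occOne n X _).1 hocc
          have := AmlqAux.memTwo n T hsub 1 h1
          omega
      rcases eq_or_ne p' (n + 2) with rfl | hne2
      · rw [AmlqAux.X'top]
        constructor
        · intro h; exact absurd h (by decide)
        · rintro ⟨-, hocc⟩
          exact absurd hocc (AmlqAux.nocc_of_acyc n X T hsub hacyc)
      · obtain ⟨p, rfl⟩ : ∃ p, p' = p + 1 := ⟨p' - 1, by omega⟩
        rw [AmlqAux.X'mid n X (p + 1) (by omega) (by omega)]
        simp only [Nat.add_sub_cancel]
        rw [hpt p (Finset.mem_Icc.mpr ⟨by omega, by omega⟩)]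
        exact and_congr_right fun _ => AmlqAux.occShift n X T hsub p (by omega) (by omega)
  · -- InjOn
    intro a _ b _ h
    exact Finset.image_injective AmlqAux.addInj h
  · -- SurjOn
    rintro T' ⟨hsub, hcard, hpt⟩
    have h1 : 1 ∉ T' := by
      intro h
      have := (hpt 1 (Finset.mem_Icc.mpr ⟨le_rfl, by omega⟩)).2
        ⟨by rw [AmlqAux.X'one]; decide, (AmlqAux.occOne n X T').2 h⟩
      rw [AmlqAux.X'one] at this
      exact absurd this (by decide)
    have hnocc : ¬ occupiedPos (AmlqAux.X' n X) T' (n + 2) := by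
      intro h
      have := (hpt (n + 2) (Finset.mem_Icc.mpr ⟨by omega, le_rfl⟩)).2
        ⟨by rw [AmlqAux.X'top]; decide, h⟩
      rw [AmlqAux.X'top] at this
      exact absurd this (by decide)
    have hn2 : (n + 2) ∉ T' := by
      intro h
      apply hnocc
      refine ⟨n + 1, by omega, ?_⟩
      have e1 : Finset.Ioc (n + 1) (n + 2) = {n + 2} := by
        ext x; simp only [Finset.mem_Ioc, Finset.mem_singleton]; omega
      rw [e1, Finset.filter_singleton, if_pos (by rw [AmlqAux.X'top]; decide)]
      simp only [Finset.card_singleton]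
      exact Finset.card_pos.mpr ⟨n + 2, Finset.mem_filter.mpr ⟨h, by omega, le_rfl⟩⟩
    have hsub2 : ∀ s ∈ T', 2 ≤ s ∧ s ≤ n + 1 := by
      intro s hs
      have := hsub hs
      simp only [Finset.mem_Icc] at this
      have hs1 : s ≠ 1 := fun h => h1 (h ▸ hs)
      have hs2 : s ≠ n + 2 := fun h => hn2 (h ▸ hs)
      omega
    set T := T'.image (· - 1) with hTdef
    have hTT' : T.image (· + 1) = T' := by
      ext x
      simp only [hTdef, Finset.mem_image]
      constructor
      · rintro ⟨y, ⟨z, hz, rfl⟩, rfl⟩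
        have := hsub2 z hz
        have hz1 : z - 1 + 1 = z := by omega
        rwa [hz1]
      · intro hx
        have := hsub2 x hx
        exact ⟨x - 1, ⟨x, hx, rfl⟩, by omega⟩
    have hTsub : T ⊆ Finset.Icc 1 n := by
      intro t ht
      simp only [hTdef, Finset.mem_image] at ht
      obtain ⟨z, hz, rfl⟩ := ht
      have := hsub2 z hz
      simp only [Finset.mem_Icc]
      omega
    refine ⟨T, ?_, hTT'⟩
    simp only [Set.mem_setOf_eq]
    refine ⟨hTsub, ?_, ?_, ?_⟩
    · have hc : T'.card = T.card := by
        rw [← hTT']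
        exact Finset.card_image_of_injective _ AmlqAux.addInj
      rw [← hc, hcard, AmlqAux.cardZeros]
    · exact AmlqAux.acyc_of_nocc n X T hTsub (by rwa [hTT'])
    · intro p hp
      simp only [Finset.mem_Icc] at hp
      have h := hpt (p + 1) (Finset.mem_Icc.mpr ⟨by omega, by omega⟩)
      rw [AmlqAux.X'mid n X (p + 1) (by omega) (by omega)] at h
      simp only [Nat.add_sub_cancel] at h
      rw [h]
      apply and_congr_right
      intro _
      have := AmlqAux.occShift n X T hTsub p (by omega) (by omega)
      rw [hTT'] at this
      exact this.symm
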